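/- Let M be a transversal matroid with presentation 𝒜 = (A_i : i ∈ [r]) on E, and let x ∉ E. For I ⊆ [r], let 𝒜^I be the system obtained by adjoining x to A_i for each i ∈ I. If Y ⊆ E satisfies |s_𝒜(Y)| = r_M(Y), then the transversal matroid M[𝒜^{s_𝒜(Y)}] equals the principal extension M +_Y x. -/

import Mathlib

/-- `Y` is a partial transversal of the set system `A : Fin r → Set α`. -/
def IsPartialTransversal {α : Type*} {r : ℕ} (A : Fin r → Set α) (Y : Set α) : Prop :=
  ∃ φ : α → Fin r, Set.InjOn φ Y ∧ ∀ y ∈ Y, y ∈ A (φ y)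

/-- The `𝒜`-support of `X`: the indices `i` with `X ∩ A_i ≠ ∅`. -/
def supp {α : Type*} {r : ℕ} (A : Fin r → Set α) (X : Set α) : Set (Fin r) :=
  {i | (X ∩ A i).Nonempty}

/-- The rank of `X` in `M`: the largest size of an independent subset of `X`. -/
noncomputable def rk {α : Type*} (M : Matroid α) (X : Set α) : ℕ :=
  sSup {n | ∃ I, M.Indep I ∧ I ⊆ X ∧ I.ncard = n}

open Set

lemma rk_bddAbove {α : Type*} [Finite α] (M : Matroid α) (X : Set α) :
    BddAbove {n | ∃ I, M.Indep I ∧ I ⊆ X ∧ I.ncard = n} := by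
  refine ⟨Nat.card α, ?_⟩
  rintro n ⟨I, -, -, rfl⟩
  exact (Set.ncard_le_ncard (Set.subset_univ I) Set.finite_univ).trans_eq (Set.ncard_univ α)

lemma rk_nonempty {α : Type*} (M : Matroid α) (X : Set α) :
    {n | ∃ I, M.Indep I ∧ I ⊆ X ∧ I.ncard = n}.Nonempty :=
  ⟨0, ∅, M.empty_indep, empty_subset X, by simp⟩

lemma ncard_le_rk {α : Type*} [Finite α] {M : Matroid α} {I X : Set α}
    (h : M.Indep I) (hIX : I ⊆ X) : I.ncard ≤ rk M X :=
  le_csSup (rk_bddAbove M X) ⟨I, h, hIX, rfl⟩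

lemma exists_rk {α : Type*} [Finite α] (M : Matroid α) (X : Set α) :
    ∃ I, M.Indep I ∧ I ⊆ X ∧ I.ncard = rk M X :=
  Nat.sSup_mem (rk_nonempty M X) (rk_bddAbove M X)

lemma rk_eq_of_basis' {α : Type*} [Finite α] {M : Matroid α} {I X : Set α}
    (hI : M.IsBasis' I X) : rk M X = I.ncard := by
  refine le_antisymm (csSup_le (rk_nonempty M X) ?_) (ncard_le_rk hI.indep hI.subset)
  rintro n ⟨J, hJ, hJX, rfl⟩
  obtain ⟨J', hJ', hJJ'⟩ := hJ.subset_isBasis'_of_subset hJX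
  have hcard : J'.ncard = I.ncard := by
    rw [Set.ncard_def, hJ'.encard_eq_encard hI, ← Set.ncard_def]
  exact (Set.ncard_le_ncard hJJ' (Set.toFinite _)).trans hcard.le

open Classical in
/-- If `|s_𝒜(Y)| = r_M(Y)`, then the transversal matroid `M[𝒜^{s_𝒜(Y)}]`
(adjoin `x` to the sets `A_i` with `i ∈ s_𝒜(Y)`) is the principal extension
`M +_Y x`: its rank function satisfies the defining formulas of `M +_Y x`. -/
theorem stmt_17 {α : Type*} {r : ℕ} [Finite α] (E : Set α) (A : Fin r → Set α)
    (hA : ∀ i, A i ⊆ E)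
    (M : Matroid α) (hME : M.E = E)
    (hInd : ∀ I, M.Indep I ↔ I ⊆ E ∧ IsPartialTransversal A I)
    (x : α) (hx : x ∉ E)
    (Y : Set α) (hY : Y ⊆ E) (hYr : (supp A Y).ncard = rk M Y)
    (N : Matroid α) (hNE : N.E = insert x E)
    (hNInd : ∀ I, N.Indep I ↔ I ⊆ insert x E ∧
      IsPartialTransversal (fun i => if i ∈ supp A Y then insert x (A i) else A i) I) :
    (∀ Z, Z ⊆ E → rk N Z = rk M Z) ∧
    (∀ Z, Z ⊆ E → rk N (insert x Z) =
      if Y ⊆ M.closure Z then rk M Z else rk M Z + 1) := by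
  have hEN : E ⊆ N.E := by rw [hNE]; exact subset_insert x E
  have hxN : x ∈ N.E := by rw [hNE]; exact mem_insert x E
  -- independence transfer on subsets of E
  have hkey : ∀ I : Set α, I ⊆ E → (N.Indep I ↔ M.Indep I) := by
    intro I hIE
    rw [hInd, hNInd]
    constructor
    · rintro ⟨-, φ, hinj, hmem⟩
      refine ⟨hIE, φ, hinj, fun y hy => ?_⟩
      have hm := hmem y hy
      by_cases h : φ y ∈ supp A Y
      · simp only [h, if_pos] at hm
        rcases hm with rfl | h'
        · exact absurd (hIE hy) hx
        · exact h'
      · simpa [h] using hm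
    · rintro ⟨-, φ, hinj, hmem⟩
      refine ⟨hIE.trans (subset_insert _ _), φ, hinj, fun y hy => ?_⟩
      have hm := hmem y hy
      by_cases h : φ y ∈ supp A Y <;> simp [h, hm]
  -- Part A
  have partA : ∀ Z, Z ⊆ E → rk N Z = rk M Z := by
    intro Z hZ
    unfold rk
    congr 1
    ext n
    constructor
    · rintro ⟨I, hI, hIZ, rfl⟩
      exact ⟨I, (hkey I (hIZ.trans hZ)).1 hI, hIZ, rfl⟩
    · rintro ⟨I, hI, hIZ, rfl⟩
      exact ⟨I, (hkey I (hIZ.trans hZ)).2 hI, hIZ, rfl⟩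
  -- closure transfer
  have hclosure : ∀ Z, Z ⊆ E → M.closure Z ⊆ N.closure Z := by
    intro Z hZ y hy
    obtain ⟨J, hJ⟩ := M.exists_isBasis Z (by rw [hME]; exact hZ)
    rw [← hJ.closure_eq_closure] at hy
    have hJE : J ⊆ E := hJ.subset.trans hZ
    have hJN : N.Indep J := (hkey J hJE).2 hJ.indep
    have hyE : y ∈ E := by
      have := M.closure_subset_ground J hy
      rwa [hME] at this
    by_cases hyJ : y ∈ J
    · exact N.closure_subset_closure hJ.subset (N.mem_closure_of_mem hyJ (hJE.trans hEN))
    · have hdep : ¬ M.Indep (insert y J) := by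
        intro hind
        rw [hJ.indep.insert_indep_iff_of_notMem hyJ] at hind
        exact hind.2 hy
      have hyN : y ∈ N.closure J := by
        rw [hJN.mem_closure_iff_of_notMem hyJ, Matroid.dep_iff]
        refine ⟨fun hind => hdep ((hkey _ (insert_subset hyE hJE)).1 hind), ?_⟩
        exact (insert_subset hyE hJE).trans hEN
      exact N.closure_subset_closure hJ.subset hyN
  refine ⟨partA, fun Z hZ => ?_⟩
  have hZN : Z ⊆ N.E := hZ.trans hEN
  by_cases hcase : Y ⊆ M.closure Z
  · rw [if_pos hcase]
    -- get a big independent subset of Y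
    obtain ⟨B, hBind, hBY, hBcard⟩ := exists_rk M Y
    have hBS : B.ncard = (supp A Y).ncard := by rw [hBcard, hYr]
    have hBE : B ⊆ E := hBY.trans hY
    have hxB : x ∉ B := fun h => hx (hBE h)
    have hnind : ¬ N.Indep (insert x B) := by
      rw [hNInd]
      rintro ⟨-, φ, hinj, hmem⟩
      have himg : φ '' insert x B ⊆ supp A Y := by
        rintro _ ⟨z, hz, rfl⟩
        rcases hz with rfl | hzB
        · have hm := hmem z (mem_insert _ _)
          by_cases h : φ z ∈ supp A Y
          · exact h
          · simp only [h, if_neg, if_false] at hm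
            exact absurd (hA _ hm) hx
        · have hm := hmem z (mem_insert_of_mem _ hzB)
          have hzx : z ≠ x := fun h => hx (hBE (h ▸ hzB))
          have hzA : z ∈ A (φ z) := by
            by_cases h : φ z ∈ supp A Y
            · simp only [h, if_pos] at hm
              rcases hm with h' | h'
              · exact absurd h' hzx
              · exact h'
            · simpa [h] using hm
          exact ⟨z, hBY hzB, hzA⟩
      have h1 : (insert x B).ncard ≤ (supp A Y).ncard := by
        rw [← Set.ncard_image_of_injOn hinj]
        exact Set.ncard_le_ncard himg (Set.toFinite _)
      rw [Set.ncard_insert_of_notMem hxB (Set.toFinite _), hBS] at h1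
      omega
    have hBN : N.Indep B := (hkey B hBE).2 hBind
    have hxcl : x ∈ N.closure B := by
      rw [hBN.mem_closure_iff_of_notMem hxB, Matroid.dep_iff]
      exact ⟨hnind, insert_subset hxN (hBE.trans hEN)⟩
    have hxclZ : x ∈ N.closure Z := by
      have hYN : Y ⊆ N.closure Z := fun y hy => hclosure Z hZ (hcase hy)
      exact N.closure_subset_closure_of_subset_closure (fun b hb => hYN (hBY hb)) hxcl
    obtain ⟨I, hI⟩ := N.exists_isBasis Z hZN
    have hI2 : N.IsBasis I (insert x Z) := by
      refine hI.indep.isBasis_of_subset_of_subset_closure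
        (hI.subset.trans (subset_insert _ _)) ?_
      rw [insert_subset_iff]
      refine ⟨by rw [hI.closure_eq_closure]; exact hxclZ, hI.subset_closure⟩
    rw [rk_eq_of_basis' hI2.isBasis', ← rk_eq_of_basis' hI.isBasis', partA Z hZ]
  · rw [if_neg hcase]
    obtain ⟨y, hyY, hycl⟩ := not_subset.mp hcase
    obtain ⟨J, hJ⟩ := M.exists_isBasis Z (by rw [hME]; exact hZ)
    have hJE : J ⊆ E := hJ.subset.trans hZ
    have hyJcl : y ∉ M.closure J := by rw [hJ.closure_eq_closure]; exact hycl
    have hyJ : y ∉ J := fun h => hyJcl (M.mem_closure_of_mem h hJ.indep.subset_ground)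
    have hyE : y ∈ E := hY hyY
    have hins : M.Indep (insert y J) := by
      rw [hJ.indep.insert_indep_iff_of_notMem hyJ]
      exact ⟨by rw [hME]; exact hyE, hyJcl⟩
    obtain ⟨-, ν, hνinj, hνmem⟩ := (hInd _).1 hins
    have hνyS : ν y ∈ supp A Y := ⟨y, hyY, hνmem y (mem_insert _ _)⟩
    have hxJ : x ∉ J := fun h => hx (hJE h)
    have hNx : N.Indep (insert x J) := by
      rw [hNInd]
      refine ⟨insert_subset_insert hJE, fun z => if z = x then ν y else ν z, ?_, ?_⟩
      · rintro a ha b hb hab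
        simp only at hab
        have hJx : ∀ c ∈ J, c ≠ x := fun c hc h => hx (hJE (h ▸ hc))
        rcases ha with ha | haJ <;> rcases hb with hb | hbJ
        · rw [ha, hb]
        · exfalso
          rw [if_pos ha, if_neg (hJx b hbJ)] at hab
          have hyb : y = b := hνinj (mem_insert _ _) (mem_insert_of_mem _ hbJ) hab
          exact hyJ (hyb ▸ hbJ)
        · exfalso
          rw [if_neg (hJx a haJ), if_pos hb] at hab
          have hay : a = y := hνinj (mem_insert_of_mem _ haJ) (mem_insert _ _) hab
          exact hyJ (hay ▸ haJ)
        · rw [if_neg (hJx a haJ), if_neg (hJx b hbJ)] at hab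
          exact hνinj (mem_insert_of_mem _ haJ) (mem_insert_of_mem _ hbJ) hab
      · rintro z (rfl | hzJ)
        · simp only [if_pos rfl, hνyS, if_true]
          exact mem_insert _ _
        · have hzx : z ≠ x := fun h => hx (hJE (h ▸ hzJ))
          have hm : z ∈ A (ν z) := hνmem z (mem_insert_of_mem _ hzJ)
          simp only [if_neg hzx]
          by_cases h : ν z ∈ supp A Y <;> simp [h, hm]
    have hlow : rk M Z + 1 ≤ rk N (insert x Z) := by
      have hcard : (insert x J).ncard = rk M Z + 1 := by
        rw [Set.ncard_insert_of_notMem hxJ (Set.toFinite _), rk_eq_of_basis' hJ.isBasis']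
      rw [← hcard]
      exact ncard_le_rk hNx (insert_subset_insert hJ.subset)
    have hup : rk N (insert x Z) ≤ rk M Z + 1 := by
      apply csSup_le (rk_nonempty N (insert x Z))
      rintro n ⟨I, hI, hIZ, rfl⟩
      have hsub : I \ {x} ⊆ Z := by
        rintro a ⟨haI, hax⟩
        rcases hIZ haI with rfl | h
        · exact absurd rfl hax
        · exact h
      have h1 : M.Indep (I \ {x}) := (hkey _ (hsub.trans hZ)).1 (hI.subset diff_subset)
      have h2 : (I \ {x}).ncard ≤ rk M Z := ncard_le_rk h1 hsub
      have h3 : I.ncard ≤ (I \ {x}).ncard + 1 := by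
        refine (Set.ncard_le_ncard (fun a ha => ?_) (Set.toFinite _)).trans
          (Set.ncard_insert_le x (I \ {x}))
        by_cases h : a = x
        · exact h ▸ mem_insert _ _
        · exact mem_insert_of_mem _ ⟨ha, h⟩
      omega
    omega
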